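/- Let (Ω, 𝓕, P) be a probability space, let F : Ω → ℝ be a bounded measurable function, and let Ψ : Ω → ℝ be a measurable function with 0 ≤ Ψ ≤ 1 everywhere. Then Var(F; P) ≤ Var(F·Ψ; P) + 3·‖F‖_∞² · P({ω : Ψ(ω) ≠ 1}). -/

import Mathlib

open MeasureTheory

/-- The variance of a real-valued function `G` with respect to a measure `P`:
`Var(G; P) = ∫ G² dP − (∫ G dP)²`. -/
noncomputable def var {Ω : Type*} [MeasurableSpace Ω] (P : Measure Ω) (G : Ω → ℝ) : ℝ :=
  (∫ ω, (G ω) ^ 2 ∂P) - (∫ ω, G ω ∂P) ^ 2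

/-- Cut-off estimate: if `F` is bounded measurable and `Ψ` is measurable with `0 ≤ Ψ ≤ 1`,
then `Var(F; P) ≤ Var(F·Ψ; P) + 3‖F‖_∞² · P(Ψ ≠ 1)`. -/
theorem variance_cutoff {Ω : Type*} [MeasurableSpace Ω] (P : Measure Ω)
    [IsProbabilityMeasure P] (F Ψ : Ω → ℝ)
    (hF : Measurable F) (hFbdd : ∃ C : ℝ, ∀ ω, |F ω| ≤ C)
    (hΨ : Measurable Ψ) (hΨ0 : ∀ ω, 0 ≤ Ψ ω) (hΨ1 : ∀ ω, Ψ ω ≤ 1) :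
    var P F ≤ var P (fun ω => F ω * Ψ ω)
      + 3 * (eLpNormEssSup F P).toReal ^ 2 * (P {ω | Ψ ω ≠ 1}).toReal := by
  obtain ⟨C₀, hC₀⟩ := hFbdd
  set C : ℝ := |C₀| with hCdef
  have hC : ∀ ω, |F ω| ≤ C := fun ω => (hC₀ ω).trans (le_abs_self C₀)
  have hC0 : 0 ≤ C := abs_nonneg _
  set M : ℝ := (eLpNormEssSup F P).toReal with hMdef
  set S : Set Ω := {ω | Ψ ω ≠ 1} with hSdef
  set p : ℝ := (P S).toReal with hpdef
  have hM0 : 0 ≤ M := ENNReal.toReal_nonneg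
  have hp0 : 0 ≤ p := ENNReal.toReal_nonneg
  have hS : MeasurableSet S := (hΨ (measurableSet_singleton (1 : ℝ))).compl
  -- essential sup is finite
  have hfin : eLpNormEssSup F P ≤ ENNReal.ofReal C :=
    eLpNormEssSup_le_of_ae_bound (Filter.Eventually.of_forall fun ω => by
      simpa [Real.norm_eq_abs] using hC ω)
  have hfin' : eLpNormEssSup F P ≠ ⊤ := (hfin.trans_lt ENNReal.ofReal_lt_top).ne
  -- a.e. bound |F| ≤ M
  have hMae : ∀ᵐ ω ∂P, |F ω| ≤ M := by
    filter_upwards [ae_le_eLpNormEssSup (f := F) (μ := P)] with ω hω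
    have := ENNReal.toReal_mono hfin' hω
    simpa [Real.norm_eq_abs] using this
  -- pointwise bounds on Ψ
  have hΨabs : ∀ ω, |Ψ ω| ≤ 1 := fun ω => abs_le.2 ⟨by linarith [hΨ0 ω], hΨ1 ω⟩
  -- integrability
  have mkInt : ∀ (g : Ω → ℝ), Measurable g → (∀ ω, |g ω| ≤ C * C + C) → Integrable g P := by
    intro g hg hgb
    exact (memLp_top_of_bound hg.aestronglyMeasurable _
      (Filter.Eventually.of_forall fun ω => by simpa [Real.norm_eq_abs] using hgb ω)).integrable
      le_top
  have intF : Integrable F P := mkInt F hF (fun ω => (hC ω).trans (by nlinarith))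
  have intFΨ : Integrable (fun ω => F ω * Ψ ω) P := by
    refine mkInt _ (hF.mul hΨ) (fun ω => ?_)
    have : |F ω * Ψ ω| ≤ C * 1 := by
      rw [abs_mul]; exact mul_le_mul (hC ω) (hΨabs ω) (abs_nonneg _) hC0
    nlinarith
  have intF2 : Integrable (fun ω => F ω ^ 2) P := by
    refine mkInt _ (hF.pow_const 2) (fun ω => ?_)
    have h := hC ω
    have := abs_nonneg (F ω)
    rw [abs_of_nonneg (sq_nonneg (F ω))]
    nlinarith [sq_abs (F ω)]
  have intFΨ2 : Integrable (fun ω => (F ω * Ψ ω) ^ 2) P := by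
    refine mkInt _ ((hF.mul hΨ).pow_const 2) (fun ω => ?_)
    have h := hC ω
    have h2 := hΨabs ω
    have := abs_nonneg (F ω)
    have := abs_nonneg (Ψ ω)
    rw [abs_of_nonneg (sq_nonneg _), mul_pow]
    have hF2 : F ω ^ 2 ≤ C ^ 2 := by nlinarith [sq_abs (F ω)]
    have hΨ2 : Ψ ω ^ 2 ≤ 1 := by nlinarith [sq_abs (Ψ ω)]
    nlinarith [sq_nonneg (F ω), sq_nonneg (Ψ ω)]
  have intInd : ∀ c : ℝ, Integrable (S.indicator fun _ => c) P :=
    fun c => (integrable_const c).indicator hS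
  -- part 1 : ∫ F² - ∫ (FΨ)² ≤ M² p
  have h1 : (∫ ω, F ω ^ 2 ∂P) - (∫ ω, (F ω * Ψ ω) ^ 2 ∂P) ≤ M ^ 2 * p := by
    rw [← integral_sub intF2 intFΨ2]
    have hmono : (∫ ω, (F ω ^ 2 - (F ω * Ψ ω) ^ 2) ∂P)
        ≤ ∫ ω, S.indicator (fun _ => M ^ 2) ω ∂P := by
      refine integral_mono_ae (intF2.sub intFΨ2) (intInd _) ?_
      filter_upwards [hMae] with ω hω
      by_cases hω1 : Ψ ω = 1
      · have : ω ∉ S := by simp [hSdef, hω1]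
        rw [Set.indicator_of_notMem this]
        simp [hω1]
      · have hmem : ω ∈ S := hω1
        rw [Set.indicator_of_mem hmem]
        have hΨ2 : 0 ≤ Ψ ω ^ 2 := sq_nonneg _
        have hΨ2' : Ψ ω ^ 2 ≤ 1 := by nlinarith [hΨ0 ω, hΨ1 ω]
        have hF2 : F ω ^ 2 ≤ M ^ 2 := by nlinarith [sq_abs (F ω), abs_nonneg (F ω)]
        have : (F ω * Ψ ω) ^ 2 = F ω ^ 2 * Ψ ω ^ 2 := by ring
        nlinarith [sq_nonneg (F ω)]
    rw [integral_indicator_const _ hS] at hmono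
    simpa [smul_eq_mul, mul_comm, Measure.real] using hmono
  -- part 2 : (∫ FΨ)² - (∫ F)² ≤ 2 M² p
  set a : ℝ := ∫ ω, F ω ∂P with hadef
  set b : ℝ := ∫ ω, F ω * Ψ ω ∂P with hbdef
  have habs_int : ∀ (g : Ω → ℝ), Integrable g P → (∀ᵐ ω ∂P, |g ω| ≤ M) →
      |∫ ω, g ω ∂P| ≤ M := by
    intro g hg hgM
    calc |∫ ω, g ω ∂P| ≤ ∫ ω, |g ω| ∂P := by
          simpa [Real.norm_eq_abs] using norm_integral_le_integral_norm g
      _ ≤ ∫ _ω, M ∂P := integral_mono_ae hg.abs (integrable_const M) hgM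
      _ = M := by simp
  have ha : |a| ≤ M := habs_int F intF hMae
  have hb : |b| ≤ M := by
    refine habs_int _ intFΨ ?_
    filter_upwards [hMae] with ω hω
    calc |F ω * Ψ ω| = |F ω| * |Ψ ω| := abs_mul _ _
      _ ≤ M * 1 := mul_le_mul hω (hΨabs ω) (abs_nonneg _) hM0
      _ = M := mul_one M
  have hba : |b - a| ≤ M * p := by
    have hsub : b - a = ∫ ω, (F ω * Ψ ω - F ω) ∂P := (integral_sub intFΨ intF).symm
    rw [hsub]
    calc |∫ ω, (F ω * Ψ ω - F ω) ∂P| ≤ ∫ ω, |F ω * Ψ ω - F ω| ∂P := by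
          simpa [Real.norm_eq_abs] using
            norm_integral_le_integral_norm (fun ω => F ω * Ψ ω - F ω)
      _ ≤ ∫ ω, S.indicator (fun _ => M) ω ∂P := by
          refine integral_mono_ae (intFΨ.sub intF).abs (intInd _) ?_
          filter_upwards [hMae] with ω hω
          by_cases hω1 : Ψ ω = 1
          · have : ω ∉ S := by simp [hSdef, hω1]
            rw [Set.indicator_of_notMem this]
            simp [hω1]
          · have hmem : ω ∈ S := hω1
            rw [Set.indicator_of_mem hmem]
            have : |F ω * Ψ ω - F ω| = |F ω| * |Ψ ω - 1| := by
              rw [← abs_mul]; ring_nf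
            rw [this]
            have h1' : |Ψ ω - 1| ≤ 1 := abs_le.2 ⟨by linarith [hΨ0 ω], by linarith [hΨ1 ω]⟩
            calc |F ω| * |Ψ ω - 1| ≤ M * 1 := mul_le_mul hω h1' (abs_nonneg _) hM0
              _ = M := mul_one M
      _ = M * p := by
          rw [integral_indicator_const _ hS]; simp [hpdef, smul_eq_mul, mul_comm, Measure.real]
  have h2 : b ^ 2 - a ^ 2 ≤ 2 * M ^ 2 * p := by
    obtain ⟨ha1, ha2⟩ := abs_le.1 ha
    obtain ⟨hb1, hb2⟩ := abs_le.1 hb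
    obtain ⟨hba1, hba2⟩ := abs_le.1 hba
    nlinarith [mul_nonneg hM0 hp0, sq_nonneg (a + b), sq_nonneg (a - b)]
  -- combine
  have : var P F - var P (fun ω => F ω * Ψ ω)
      = ((∫ ω, F ω ^ 2 ∂P) - (∫ ω, (F ω * Ψ ω) ^ 2 ∂P)) + (b ^ 2 - a ^ 2) := by
    simp only [var]; ring
  linarith [h1, h2]
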